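/- arXiv:0706.0606 — 7 statements merged into one kernel-verified Lean document; each statement's English description precedes it below -/
import Mathlib

section
/- For every integer n ≥ 1, every real p > 1, every D ∈ 𝓜ₙ and every u ∈ ℝⁿ, the function f_p(D,u,·) is a probability density: ∫_{ℝⁿ} f_p(D,u,x) dx = 1. -/
open MeasureTheory Matrix

/-- Normalization constant `A_{n,p}` for `p > 1`. -/
noncomputable def gaussA (n : ℕ) (p : ℝ) : ℝ :=
  ((p - 1) / (2 * p - n * (1 - p))) ^ ((n : ℝ) / 2) *
    Real.Gamma (p / (p - 1) + n / 2) /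
    (Real.pi ^ ((n : ℝ) / 2) * Real.Gamma (p / (p - 1)))

/-- The `p`-Gaussian density for `p > 1`. -/
noncomputable def gaussF (n : ℕ) (p : ℝ) (D : Matrix (Fin n) (Fin n) ℝ)
    (u x : Fin n → ℝ) : ℝ :=
  if 0 ≤ 1 - (p - 1) / (2 * p - n * (1 - p)) * ((x - u) ⬝ᵥ D.mulVec (x - u)) then
    gaussA n p * Real.sqrt D.det *
      (1 - (p - 1) / (2 * p - n * (1 - p)) * ((x - u) ⬝ᵥ D.mulVec (x - u))) ^ (1 / (p - 1))
  else 0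

section Helpers

open Set

lemma integral_comp_mulVec_aux {n : ℕ} (M : Matrix (Fin n) (Fin n) ℝ) (hM : M.det ≠ 0)
    (g : (Fin n → ℝ) → ℝ) :
    ∫ x, g (M.mulVec x) = |M.det|⁻¹ * ∫ y, g y := by
  have hdet : LinearMap.det (Matrix.toLin' M) ≠ 0 := by rwa [LinearMap.det_toLin']
  set L := LinearMap.equivOfDetNeZero (Matrix.toLin' M) hdet with hL
  let e : (Fin n → ℝ) ≃ᵐ (Fin n → ℝ) := L.toContinuousLinearEquiv.toHomeomorph.toMeasurableEquiv
  have he : ∀ x, e x = M.mulVec x := fun x => Matrix.toLin'_apply M x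
  have h1 : ∫ x, g (M.mulVec x) = ∫ x, g (e x) := by simp_rw [he]
  rw [h1, ← MeasureTheory.integral_map_equiv e g]
  have hmap : Measure.map e volume = Measure.map (Matrix.toLin' M) volume := by
    congr 1
  rw [hmap, Real.map_linearMap_volume_pi_eq_smul_volume_pi hdet, integral_smul_measure,
    LinearMap.det_toLin', ENNReal.toReal_ofReal (abs_nonneg _), abs_inv, smul_eq_mul]

lemma real_betaIntegral {a b : ℝ} (ha : 0 < a) (hb : 0 < b) :
    ∫ x in (0:ℝ)..1, x ^ (a - 1) * (1 - x) ^ (b - 1) =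
      Real.Gamma a * Real.Gamma b / Real.Gamma (a + b) := by
  have key := Complex.Gamma_mul_Gamma_eq_betaIntegral (s := (a : ℂ)) (t := (b : ℂ))
    (by simpa using ha) (by simpa using hb)
  have hbeta : Complex.betaIntegral a b =
      ((∫ x in (0:ℝ)..1, x ^ (a - 1) * (1 - x) ^ (b - 1) : ℝ) : ℂ) := by
    rw [Complex.betaIntegral, ← intervalIntegral.integral_ofReal]
    refine intervalIntegral.integral_congr fun x hx => ?_
    rw [Set.uIcc_of_le (by norm_num : (0:ℝ) ≤ 1)] at hx
    have h1 := Complex.ofReal_cpow hx.1 (a - 1)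
    have h2 := Complex.ofReal_cpow (by linarith [hx.2] : (0:ℝ) ≤ 1 - x) (b - 1)
    push_cast at h1 h2 ⊢
    rw [← h1, ← h2]
  rw [hbeta, ← Complex.ofReal_add, Complex.Gamma_ofReal, Complex.Gamma_ofReal,
    Complex.Gamma_ofReal] at key
  have h3 : Real.Gamma (a + b) ≠ 0 := (Real.Gamma_pos_of_pos (by linarith)).ne'
  have : Real.Gamma a * Real.Gamma b =
      Real.Gamma (a + b) * ∫ x in (0:ℝ)..1, x ^ (a - 1) * (1 - x) ^ (b - 1) := by
    exact_mod_cast key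
  rw [this]; field_simp

lemma radial_integral (n : ℕ) (hn : 1 ≤ n) {s : ℝ} (hs : 0 < s) :
    ∫ r in Ioi (0:ℝ), r ^ (n - 1) • (max (1 - r ^ 2) 0 ^ s) =
      2⁻¹ * (Real.Gamma (n / 2) * Real.Gamma (s + 1) / Real.Gamma (n / 2 + (s + 1))) := by
  set g : ℝ → ℝ := fun t => 2⁻¹ * t ^ ((n : ℝ) / 2 - 1) * max (1 - t) 0 ^ s with hg
  have step1 : ∫ r in Ioi (0:ℝ), r ^ (n - 1) • (max (1 - r ^ 2) 0 ^ s) =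
      ∫ r in Ioi (0:ℝ), (2 * r ^ ((2:ℝ) - 1)) • g (r ^ (2:ℝ)) := by
    refine setIntegral_congr_fun measurableSet_Ioi fun r hr => ?_
    have hr0 : (0:ℝ) < r := hr
    have h2 : r ^ (2:ℝ) = r ^ (2:ℕ) := by
      rw [← Real.rpow_natCast r 2]; norm_num
    have hA : (r ^ (2:ℝ)) ^ ((n : ℝ) / 2 - 1) = r ^ ((n : ℝ) - 2) := by
      rw [← Real.rpow_mul hr0.le]
      congr 1; ring
    have hnat : (r : ℝ) ^ (n - 1) = r ^ ((n : ℝ) - 1) := by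
      rw [← Real.rpow_natCast r (n - 1), Nat.cast_sub hn, Nat.cast_one]
    simp only [smul_eq_mul, hg, hA]
    rw [hnat, h2, show ((2:ℝ) - 1) = 1 by norm_num, Real.rpow_one]
    rw [show (2:ℝ) * r * (2⁻¹ * r ^ ((n:ℝ) - 2) * max (1 - r ^ (2:ℕ)) 0 ^ s) =
        (r ^ (1:ℝ) * r ^ ((n:ℝ) - 2)) * max (1 - r ^ (2:ℕ)) 0 ^ s by
      rw [Real.rpow_one]; ring, ← Real.rpow_add hr0,
      show (1:ℝ) + ((n:ℝ) - 2) = (n:ℝ) - 1 by ring]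
  rw [step1, integral_comp_rpow_Ioi_of_pos (g := g) (by norm_num : (0:ℝ) < 2)]
  have step2 : ∫ t in Ioi (0:ℝ), g t = ∫ t in Ioc (0:ℝ) 1, g t := by
    have h1 : ∫ t in Ioi (0:ℝ), g t = ∫ t in Ioi (0:ℝ), (Ioc (0:ℝ) 1).indicator g t := by
      refine setIntegral_congr_fun measurableSet_Ioi fun t ht => ?_
      by_cases h : t ≤ 1
      · rw [indicator_of_mem (show t ∈ Ioc (0:ℝ) 1 from ⟨ht, h⟩) g]
      · rw [indicator_of_notMem (by simp [mem_Ioc, h])]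
        have hm : max (1 - t) 0 = 0 := by
          rw [max_eq_right]; linarith [not_le.mp h]
        simp [hg, hm, Real.zero_rpow hs.ne']
    rw [h1, setIntegral_indicator measurableSet_Ioc,
      inter_eq_self_of_subset_right Ioc_subset_Ioi_self]
  rw [step2]
  have step3 : ∫ t in Ioc (0:ℝ) 1, g t =
      2⁻¹ * ∫ t in Ioc (0:ℝ) 1, t ^ ((n : ℝ) / 2 - 1) * (1 - t) ^ ((s + 1) - 1) := by
    rw [← integral_const_mul]
    refine setIntegral_congr_fun measurableSet_Ioc fun t ht => ?_
    have : max (1 - t) 0 = 1 - t := max_eq_left (by linarith [ht.2])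
    simp only [hg, this]
    ring_nf
  rw [step3, ← intervalIntegral.integral_of_le zero_le_one]
  have hn2 : (0:ℝ) < (n : ℝ) / 2 := by
    have : (1:ℝ) ≤ n := by exact_mod_cast hn
    linarith
  rw [real_betaIntegral hn2 (by linarith)]

lemma ball_integral (n : ℕ) (hn : 1 ≤ n) {s : ℝ} (hs : 0 < s) :
    ∫ z : Fin n → ℝ, max (1 - z ⬝ᵥ z) 0 ^ s =
      Real.pi ^ ((n : ℝ) / 2) * Real.Gamma (s + 1) / Real.Gamma (s + 1 + n / 2) := by
  haveI : Nonempty (Fin n) := ⟨⟨0, hn⟩⟩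
  haveI : Nontrivial (EuclideanSpace ℝ (Fin n)) := by
    refine ⟨EuclideanSpace.single ⟨0, hn⟩ (1:ℝ), 0, fun h => ?_⟩
    have := congrArg (fun v : EuclideanSpace ℝ (Fin n) => v ⟨0, hn⟩) h
    simp [EuclideanSpace.single_apply] at this
  set f : ℝ → ℝ := fun r => max (1 - r ^ 2) 0 ^ s with hf
  have h1 : ∫ z : Fin n → ℝ, max (1 - z ⬝ᵥ z) 0 ^ s
      = ∫ x : EuclideanSpace ℝ (Fin n), f ‖x‖ := by
    rw [← (EuclideanSpace.volume_preserving_symm_measurableEquiv_toLp (Fin n)).integral_comp'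
      (fun z => max (1 - z ⬝ᵥ z) 0 ^ s)]
    refine integral_congr_ae (Filter.Eventually.of_forall fun x => ?_)
    have hdot : (MeasurableEquiv.toLp 2 (Fin n → ℝ)).symm x ⬝ᵥ
        (MeasurableEquiv.toLp 2 (Fin n → ℝ)).symm x = ‖x‖ ^ 2 := by
      rw [EuclideanSpace.norm_eq, Real.sq_sqrt (by positivity)]
      simp only [dotProduct, sq, Real.norm_eq_abs, abs_mul_abs_self]
      rfl
    simp [hf, hdot]
    rw [← hdot]; rfl
  rw [h1, MeasureTheory.integral_fun_norm_addHaar volume f]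
  have hdim : Module.finrank ℝ (EuclideanSpace ℝ (Fin n)) = n := by
    simp [finrank_euclideanSpace]
  rw [hdim]
  rw [radial_integral n hn hs]
  rw [measureReal_def, EuclideanSpace.volume_ball]
  have hcard : Fintype.card (Fin n) = n := Fintype.card_fin n
  rw [hcard]
  simp only [ENNReal.ofReal_one, one_pow, one_mul]
  rw [ENNReal.toReal_ofReal (by positivity)]
  -- now pure algebra
  have hπ : (Real.sqrt Real.pi) ^ n = Real.pi ^ ((n : ℝ) / 2) := by
    rw [Real.sqrt_eq_rpow, ← Real.rpow_natCast (Real.pi ^ ((1:ℝ)/2)) n,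
      ← Real.rpow_mul Real.pi_nonneg]
    congr 1; ring
  have hΓ : Real.Gamma ((n : ℝ) / 2 + 1) = ((n : ℝ) / 2) * Real.Gamma ((n : ℝ) / 2) := by
    rw [Real.Gamma_add_one (by positivity)]
  have hn2 : (0:ℝ) < (n : ℝ) / 2 := by positivity
  have hΓ2 : Real.Gamma ((n : ℝ) / 2) ≠ 0 := (Real.Gamma_pos_of_pos hn2).ne'
  have hΓ3 : Real.Gamma ((n:ℝ) / 2 + (s + 1)) ≠ 0 :=
    (Real.Gamma_pos_of_pos (by linarith)).ne'
  rw [hπ, hΓ, nsmul_eq_mul, show (n:ℝ)/2 + (s+1) = s + 1 + n/2 by ring]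
  have hne : (n:ℝ) ≠ 0 := by positivity
  rw [smul_eq_mul]
  field_simp

lemma exists_posSemidef_sqrt_of_posDef {n : ℕ} (D : Matrix (Fin n) (Fin n) ℝ)
    (hD : D.PosDef) : ∃ S : Matrix (Fin n) (Fin n) ℝ, S.PosSemidef ∧ S * S = D := by
  open scoped MatrixOrder in
  exact ⟨CFC.sqrt D, (CFC.sqrt_nonneg D).posSemidef,
    CFC.sqrt_mul_sqrt_self D hD.posSemidef.nonneg⟩

end Helpers

/-- for `n ≥ 1`, `p > 1`, `D` symmetric positive definite and `u ∈ ℝⁿ`,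
`f_p(D,u,·)` integrates to 1. -/
theorem integral_gaussF_eq_one (n : ℕ) (hn : 1 ≤ n) (p : ℝ) (hp : 1 < p)
    (D : Matrix (Fin n) (Fin n) ℝ) (hD : D.PosDef) (u : Fin n → ℝ) :
    ∫ x : Fin n → ℝ, gaussF n p D u x = 1 := by
  have hp1 : (0:ℝ) < p - 1 := by linarith
  have hn1 : (1:ℝ) ≤ n := by exact_mod_cast hn
  have hden : 0 < 2 * p - n * (1 - p) := by nlinarith
  set a : ℝ := (p - 1) / (2 * p - n * (1 - p)) with ha
  have ha0 : 0 < a := div_pos hp1 hden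
  set s : ℝ := 1 / (p - 1) with hs
  have hs0 : 0 < s := by positivity
  -- rewrite the density using max
  have hrw : ∀ x, gaussF n p D u x =
      (gaussA n p * Real.sqrt D.det) *
        max (1 - a * ((x - u) ⬝ᵥ D.mulVec (x - u))) 0 ^ s := by
    intro x
    rw [gaussF]
    split_ifs with h
    · rw [max_eq_left h]
    · rw [max_eq_right (le_of_lt (not_le.mp h)), Real.zero_rpow hs0.ne', mul_zero]
  simp_rw [hrw]
  rw [integral_const_mul]
  rw [integral_sub_right_eq_self (fun y => max (1 - a * (y ⬝ᵥ D.mulVec y)) 0 ^ s) u]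
  -- square root of D
  obtain ⟨S, hSps, hSS⟩ := exists_posSemidef_sqrt_of_posDef D hD
  have hSt : Sᵀ = S := by
    rw [← Matrix.conjTranspose_eq_transpose_of_trivial]
    exact hSps.1
  have hdetS_nonneg : 0 ≤ S.det := by
    rw [hSps.1.det_eq_prod_eigenvalues]
    exact Finset.prod_nonneg fun i _ => hSps.eigenvalues_nonneg i
  have hdetSS : S.det * S.det = D.det := by rw [← Matrix.det_mul, hSS]
  have hdetS_pos : 0 < S.det := by
    rcases hdetS_nonneg.lt_or_eq with h | h
    · exact h
    · exfalso; have := hD.det_pos; rw [← hdetSS, ← h, mul_zero] at this; exact lt_irrefl _ this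
  have hsqrtD : Real.sqrt D.det = S.det := by
    rw [← hdetSS, Real.sqrt_mul_self hdetS_nonneg]
  set M : Matrix (Fin n) (Fin n) ℝ := Real.sqrt a • S with hM
  have hq : ∀ y : Fin n → ℝ, (M.mulVec y) ⬝ᵥ (M.mulVec y) = a * (y ⬝ᵥ D.mulVec y) := by
    intro y
    have h1 : M.mulVec y = Real.sqrt a • S.mulVec y := by
      rw [hM, Matrix.smul_mulVec]
    have h2 : S.mulVec y ⬝ᵥ S.mulVec y = y ⬝ᵥ D.mulVec y := by
      calc S.mulVec y ⬝ᵥ S.mulVec y = (S.mulVec y) ᵥ* S ⬝ᵥ y := Matrix.dotProduct_mulVec _ _ _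
        _ = Sᵀ.mulVec (S.mulVec y) ⬝ᵥ y := by rw [← Matrix.mulVec_transpose]
        _ = (S * S).mulVec y ⬝ᵥ y := by rw [hSt, Matrix.mulVec_mulVec]
        _ = y ⬝ᵥ D.mulVec y := by rw [hSS, dotProduct_comm]
    rw [h1, smul_dotProduct, dotProduct_smul, smul_eq_mul, smul_eq_mul,
      ← mul_assoc, Real.mul_self_sqrt ha0.le, h2]
  have hint : ∫ y : Fin n → ℝ, max (1 - a * (y ⬝ᵥ D.mulVec y)) 0 ^ s
      = ∫ y : Fin n → ℝ, max (1 - (M.mulVec y) ⬝ᵥ (M.mulVec y)) 0 ^ s := by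
    simp_rw [hq]
  rw [hint]
  -- determinant of M
  have hdetM : M.det = Real.sqrt a ^ n * S.det := by
    rw [hM, Matrix.det_smul, Fintype.card_fin]
  have hsqa : Real.sqrt a ^ n = a ^ ((n : ℝ) / 2) := by
    rw [Real.sqrt_eq_rpow, ← Real.rpow_natCast (a ^ ((1:ℝ)/2)) n, ← Real.rpow_mul ha0.le]
    congr 1; ring
  have hapow : (0:ℝ) < a ^ ((n : ℝ) / 2) := Real.rpow_pos_of_pos ha0 _
  have hdetM_pos : 0 < M.det := by
    rw [hdetM, hsqa]; positivity
  rw [integral_comp_mulVec_aux M hdetM_pos.ne' (fun z => max (1 - z ⬝ᵥ z) 0 ^ s),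
    ball_integral n hn hs0, abs_of_pos hdetM_pos, hdetM, hsqa, hsqrtD]
  -- final algebra
  have hps : p / (p - 1) = s + 1 := by
    rw [hs]; field_simp; ring
  rw [gaussA, hps, ← ha]
  have hπ : (0:ℝ) < Real.pi ^ ((n : ℝ) / 2) := Real.rpow_pos_of_pos Real.pi_pos _
  have hΓ1 : (0:ℝ) < Real.Gamma (s + 1) := Real.Gamma_pos_of_pos (by linarith)
  have hΓ2 : (0:ℝ) < Real.Gamma (s + 1 + n / 2) := Real.Gamma_pos_of_pos (by positivity)
  field_simp
end

section
/- Let n ≥ 1 be an integer, p > 1, q > 1, D ∈ 𝓜ₙ, u ∈ ℝⁿ, and a = (p−1)/(2p−n(1−p)). Then ∫_{ℝⁿ} f_p(D,u,x)^q dx = (a/π)^{n(q−1)/2} · (Γ(p/(p−1)+n/2)/Γ(p/(p−1)))^q · Γ(q/(p−1)+1)/Γ(q/(p−1)+1+n/2) · (det D)^{(q−1)/2}. -/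
open MeasureTheory Matrix

open Real Set

lemma real_beta (z w : ℝ) (hz : 0 < z) (hw : 0 < w) :
    ∫ t in (0:ℝ)..1, t ^ (z-1) * (1-t) ^ (w-1) =
      Real.Gamma z * Real.Gamma w / Real.Gamma (z + w) := by
  have key := Complex.Gamma_mul_Gamma_eq_betaIntegral (s := z) (t := w)
    (by simpa using hz) (by simpa using hw)
  have hbeta : Complex.betaIntegral z w =
      ((∫ t in (0:ℝ)..1, t ^ (z-1) * (1-t) ^ (w-1) : ℝ) : ℂ) := by
    rw [Complex.betaIntegral, ← intervalIntegral.integral_ofReal]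
    apply intervalIntegral.integral_congr
    intro x hx
    rw [Set.uIcc_of_le (by norm_num : (0:ℝ) ≤ 1)] at hx
    push_cast
    rw [Complex.ofReal_cpow hx.1, Complex.ofReal_cpow (by linarith [hx.2] : (0:ℝ) ≤ 1 - x)]
    push_cast
    ring
  rw [hbeta, ← Complex.ofReal_add, Complex.Gamma_ofReal, Complex.Gamma_ofReal, Complex.Gamma_ofReal] at key
  have hg : Real.Gamma (z + w) ≠ 0 := (Real.Gamma_pos_of_pos (by linarith)).ne'
  have := congrArg Complex.re key
  simp only [← Complex.ofReal_mul, Complex.ofReal_re] at this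
  field_simp
  linarith [this]

lemma radial (n : ℕ) (hn : 1 ≤ n) (s : ℝ) (hs : 0 < s) :
    ∫ y in Ioi (0:ℝ), y ^ (n - 1) * (max 0 (1 - y^2)) ^ s
      = Real.Gamma (n/2) * Real.Gamma (s+1) / (2 * Real.Gamma ((n:ℝ)/2 + (s+1))) := by
  have h2 : (0:ℝ) < 2 := by norm_num
  set g : ℝ → ℝ := fun t => (2:ℝ)⁻¹ * (t ^ ((n:ℝ)/2 - 1) * (max 0 (1-t)) ^ s) with hg
  have key := integral_comp_rpow_Ioi_of_pos (g := g) (p := 2) h2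
  have h1 : ∫ x in Ioi (0:ℝ), ((2:ℝ) * x ^ ((2:ℝ)-1)) • g (x ^ (2:ℝ))
      = ∫ y in Ioi (0:ℝ), y ^ (n - 1) * (max 0 (1 - y^2)) ^ s := by
    apply setIntegral_congr_fun measurableSet_Ioi
    intro x hx
    have hx' : (0:ℝ) < x := hx
    have : (x ^ (2:ℝ)) ^ ((n:ℝ)/2 - 1) = x ^ ((n:ℝ) - 2) := by
      rw [← Real.rpow_mul hx'.le]
      congr 1; ring
    simp only [smul_eq_mul, g]
    rw [this]
    have hx2 : x ^ (2:ℝ) = x ^ 2 := by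
      rw [← Real.rpow_natCast x 2]; norm_num
    rw [hx2]
    have : (2:ℝ) * x ^ ((2:ℝ)-1) * ((2:ℝ)⁻¹ * (x ^ ((n:ℝ) - 2) * (max 0 (1-x^2)) ^ s))
        = (x ^ ((2:ℝ)-1) * x ^ ((n:ℝ) - 2)) * (max 0 (1-x^2)) ^ s := by ring
    rw [this, ← Real.rpow_add hx']
    congr 1
    rw [← Real.rpow_natCast x (n-1)]
    congr 1
    have : ((n:ℝ)) = ((n - 1 : ℕ) : ℝ) + 1 := by
      rw [Nat.cast_sub hn]; push_cast; ring
    rw [this]; ring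
  rw [h1] at key
  rw [key]
  have h3 : ∫ t in Ioi (0:ℝ), g t = ∫ t in Ioc (0:ℝ) 1, g t := by
    apply setIntegral_eq_of_subset_of_ae_diff_eq_zero measurableSet_Ioi.nullMeasurableSet
      Ioc_subset_Ioi_self
    filter_upwards with t ht
    obtain ⟨ht0, ht1⟩ := ht
    have ht1' : (1:ℝ) < t := by
      by_contra h
      exact ht1 ⟨ht0, le_of_not_gt h⟩
    have : max 0 (1 - t) = 0 := max_eq_left (by linarith)
    simp [g, this, Real.zero_rpow hs.ne']
  rw [h3]
  have h4 : ∫ t in Ioc (0:ℝ) 1, g t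
      = (2:ℝ)⁻¹ * ∫ t in (0:ℝ)..1, t ^ ((n:ℝ)/2 - 1) * (1 - t) ^ ((s+1) - 1) := by
    rw [intervalIntegral.integral_of_le (by norm_num : (0:ℝ) ≤ 1), ← integral_const_mul]
    apply setIntegral_congr_fun measurableSet_Ioc
    intro t ht
    have : max 0 (1 - t) = 1 - t := max_eq_right (by linarith [ht.2])
    simp [g, this]
  rw [h4, real_beta ((n:ℝ)/2) (s+1) (by positivity) (by linarith)]
  ring

lemma euclid (n : ℕ) (hn : 1 ≤ n) (s : ℝ) (hs : 0 < s) :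
    ∫ z : EuclideanSpace ℝ (Fin n), (max 0 (1 - ‖z‖^2)) ^ s
      = Real.pi ^ ((n:ℝ)/2) * Real.Gamma (s+1) / Real.Gamma (s + 1 + (n:ℝ)/2) := by
  haveI : Nonempty (Fin n) := ⟨⟨0, hn⟩⟩
  haveI : Nontrivial (EuclideanSpace ℝ (Fin n)) := by infer_instance
  have hdim : Module.finrank ℝ (EuclideanSpace ℝ (Fin n)) = n := finrank_euclideanSpace_fin
  have key := integral_fun_norm_addHaar (volume : Measure (EuclideanSpace ℝ (Fin n)))
    (fun r => (max 0 (1 - r^2)) ^ s)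
  rw [hdim] at key
  have hball : volume.real (Metric.ball (0 : EuclideanSpace ℝ (Fin n)) 1)
      = Real.sqrt π ^ n / Real.Gamma ((n:ℝ)/2 + 1) := by
    rw [measureReal_def, EuclideanSpace.volume_ball]
    simp [Fintype.card_fin]
    positivity
  rw [key, hball]
  simp only [nsmul_eq_mul, smul_eq_mul]
  rw [radial n hn s hs]
  have hpi : Real.sqrt π ^ n = π ^ ((n:ℝ)/2) := by
    rw [Real.sqrt_eq_rpow, ← Real.rpow_natCast (π ^ ((1:ℝ)/2)) n, ← Real.rpow_mul pi_pos.le]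
    congr 1; ring
  have hG1 : Real.Gamma ((n:ℝ)/2 + 1) = ((n:ℝ)/2) * Real.Gamma ((n:ℝ)/2) :=
    Real.Gamma_add_one (by positivity)
  have hGpos : 0 < Real.Gamma ((n:ℝ)/2) := Real.Gamma_pos_of_pos (by positivity)
  have hGpos2 : 0 < Real.Gamma ((n:ℝ)/2 + (s+1)) := Real.Gamma_pos_of_pos (by positivity)
  have harg : (n:ℝ)/2 + (s+1) = s + 1 + (n:ℝ)/2 := by ring
  rw [hpi, hG1, harg] at *
  have hn' : (0:ℝ) < n := by exact_mod_cast hn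
  field_simp

lemma quad (n : ℕ) (hn : 1 ≤ n) (a s : ℝ) (ha : 0 < a) (hs : 0 < s)
    (D : Matrix (Fin n) (Fin n) ℝ) (hD : D.PosDef) (u : Fin n → ℝ) :
    ∫ x : Fin n → ℝ, (max 0 (1 - a * ((x - u) ⬝ᵥ D.mulVec (x - u)))) ^ s
      = (a ^ ((n:ℝ)/2) * Real.sqrt D.det)⁻¹ *
        (Real.pi ^ ((n:ℝ)/2) * Real.Gamma (s+1) / Real.Gamma (s + 1 + (n:ℝ)/2)) := by
  have htrans : ∫ x : Fin n → ℝ, (max 0 (1 - a * ((x - u) ⬝ᵥ D.mulVec (x - u)))) ^ s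
      = ∫ x : Fin n → ℝ, (max 0 (1 - a * (x ⬝ᵥ D.mulVec x))) ^ s :=
    integral_sub_right_eq_self (fun x => (max 0 (1 - a * (x ⬝ᵥ D.mulVec x))) ^ s) u
  rw [htrans]
  set B := a • D with hBdef
  have hB : B.PosDef := by
    refine Matrix.PosDef.of_dotProduct_mulVec_pos ?_ fun x hx => ?_
    · have h1 := hD.1
      unfold Matrix.IsHermitian at h1 ⊢
      rw [hBdef, Matrix.conjTranspose_smul, h1]
      norm_num
    · have := hD.dotProduct_mulVec_pos hx
      simp only [hBdef, Matrix.smul_mulVec, dotProduct_smul, smul_eq_mul]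
      simp only [star_trivial] at this ⊢
      positivity
  open scoped MatrixOrder in
  set S := CFC.sqrt B with hSdef
  open scoped MatrixOrder in
  have hSS : S * S = B := CFC.sqrt_mul_sqrt_self B hB.posSemidef.nonneg
  open scoped MatrixOrder in
  have hherm : Sᴴ = S := (CFC.sqrt_nonneg B).posSemidef.1
  have hSt : Sᵀ = S := by
    rw [← Matrix.conjTranspose_eq_transpose_of_trivial, hherm]
  have hdetB : B.det = a ^ n * D.det := by rw [hBdef, Matrix.det_smul, Fintype.card_fin]
  have hdetBpos : 0 < B.det := hB.det_pos
  have hdetS : S.det * S.det = B.det := by rw [← Matrix.det_mul, hSS]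
  have hdetSne : S.det ≠ 0 := by
    intro h; rw [h, zero_mul] at hdetS; exact hdetBpos.ne hdetS
  have habsS : |S.det| = Real.sqrt B.det := by
    rw [← hdetS, ← sq, Real.sqrt_sq_eq_abs]
  have hquad : ∀ x : Fin n → ℝ, a * (x ⬝ᵥ D.mulVec x) = (S.mulVec x) ⬝ᵥ (S.mulVec x) := by
    intro x
    have h1 : a * (x ⬝ᵥ D.mulVec x) = x ⬝ᵥ B.mulVec x := by
      rw [hBdef, Matrix.smul_mulVec, dotProduct_smul, smul_eq_mul]
    rw [h1, ← hSS, ← Matrix.mulVec_mulVec, Matrix.dotProduct_mulVec, ← Matrix.mulVec_transpose, hSt]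
  -- continuity of the integrand as a function of y
  have hF : Continuous (fun y : Fin n → ℝ => (max 0 (1 - y ⬝ᵥ y)) ^ s) := by
    have hdot : Continuous (fun y : Fin n → ℝ => y ⬝ᵥ y) := by
      unfold dotProduct
      exact continuous_finset_sum _ (fun i _ => (continuous_apply i).mul (continuous_apply i))
    exact ((continuous_const.max (continuous_const.sub hdot))).rpow_const (fun x => Or.inr hs.le)
  -- change of variables
  set T : (Fin n → ℝ) →ₗ[ℝ] (Fin n → ℝ) := Matrix.toLin' S with hTdef
  have hTdet : LinearMap.det T = S.det := by rw [hTdef, LinearMap.det_toLin']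
  have hTdetne : LinearMap.det T ≠ 0 := by rw [hTdet]; exact hdetSne
  have hmap : Measure.map T volume = ENNReal.ofReal |(S.det)⁻¹| • volume := by
    rw [MeasureTheory.Measure.map_linearMap_addHaar_pi_eq_smul_addHaar hTdetne volume, hTdet]
  have hcov : ∫ x : Fin n → ℝ, (max 0 (1 - a * (x ⬝ᵥ D.mulVec x))) ^ s
      = |S.det|⁻¹ * ∫ y : Fin n → ℝ, (max 0 (1 - y ⬝ᵥ y)) ^ s := by
    have h2 : ∫ x : Fin n → ℝ, (max 0 (1 - a * (x ⬝ᵥ D.mulVec x))) ^ s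
        = ∫ x : Fin n → ℝ, (max 0 (1 - (T x) ⬝ᵥ (T x))) ^ s := by
      congr 1; funext x
      rw [hquad x]
      congr 2 <;> · rw [hTdef]; simp [Matrix.toLin'_apply]
    rw [h2, ← integral_map (φ := T) (T.continuous_of_finiteDimensional.measurable.aemeasurable)
      hF.aestronglyMeasurable, hmap, integral_smul_measure,
      ENNReal.toReal_ofReal (abs_nonneg _), smul_eq_mul, abs_inv]
  rw [hcov]
  -- move to Euclidean space
  have heuc : ∫ y : Fin n → ℝ, (max 0 (1 - y ⬝ᵥ y)) ^ s
      = ∫ z : EuclideanSpace ℝ (Fin n), (max 0 (1 - ‖z‖^2)) ^ s := by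
    rw [← ((EuclideanSpace.volume_preserving_symm_measurableEquiv_toLp (Fin n)).integral_comp
      (MeasurableEquiv.toLp 2 (Fin n → ℝ)).symm.measurableEmbedding
      (fun y => (max 0 (1 - y ⬝ᵥ y)) ^ s))]
    congr 1; funext z
    have hnorm : ‖z‖^2 = ∑ i, z i * z i := by
      rw [EuclideanSpace.norm_eq, Real.sq_sqrt (by positivity)]
      refine Finset.sum_congr rfl fun i _ => ?_
      rw [Real.norm_eq_abs, sq_abs, sq]
    rw [hnorm]
    rfl
  rw [heuc, euclid n hn s hs]
  rw [habsS, hdetB, Real.sqrt_mul (by positivity) D.det]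
  have : Real.sqrt (a ^ n) = a ^ ((n:ℝ)/2) := by
    rw [Real.sqrt_eq_rpow, ← Real.rpow_natCast a n, ← Real.rpow_mul ha.le]
    congr 1; ring
  rw [this]

/-- the integral of `f_p(D,u,·)^q` for `p > 1`, `q > 1`,
with `a = (p−1)/(2p−n(1−p))`. -/
theorem integral_gaussF_rpow (n : ℕ) (hn : 1 ≤ n) (p q : ℝ) (hp : 1 < p) (hq : 1 < q)
    (D : Matrix (Fin n) (Fin n) ℝ) (hD : D.PosDef) (u : Fin n → ℝ) :
    ∫ x : Fin n → ℝ, gaussF n p D u x ^ q =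
      ((p - 1) / (2 * p - n * (1 - p)) / Real.pi) ^ ((n : ℝ) * (q - 1) / 2) *
        (Real.Gamma (p / (p - 1) + n / 2) / Real.Gamma (p / (p - 1))) ^ q *
        (Real.Gamma (q / (p - 1) + 1) / Real.Gamma (q / (p - 1) + 1 + n / 2)) *
        D.det ^ ((q - 1) / 2) := by
  set a : ℝ := (p - 1) / (2 * p - n * (1 - p)) with hadef
  have hden : 0 < 2 * p - n * (1 - p) := by
    have : (0:ℝ) ≤ n := Nat.cast_nonneg n
    nlinarith
  have ha : 0 < a := div_pos (by linarith) hden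
  set s : ℝ := q / (p - 1) with hsdef
  have hs : 0 < s := div_pos (by linarith) (by linarith)
  have hq0 : q ≠ 0 := by linarith
  set G₁ : ℝ := Real.Gamma (p / (p - 1) + n / 2) with hG1def
  set G₂ : ℝ := Real.Gamma (p / (p - 1)) with hG2def
  have hc : (0:ℝ) < p / (p - 1) := div_pos (by linarith) (by linarith)
  have hG1 : 0 < G₁ := Real.Gamma_pos_of_pos (by positivity)
  have hG2 : 0 < G₂ := Real.Gamma_pos_of_pos hc
  have hd : 0 < D.det := hD.det_pos
  have hA : 0 < gaussA n p := by
    rw [gaussA, ← hadef, ← hG1def, ← hG2def]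
    positivity
  -- pointwise identity
  have hpt : ∀ x : Fin n → ℝ, gaussF n p D u x ^ q =
      (gaussA n p * Real.sqrt D.det) ^ q *
        (max 0 (1 - a * ((x - u) ⬝ᵥ D.mulVec (x - u)))) ^ s := by
    intro x
    rw [gaussF, ← hadef]
    by_cases h : 0 ≤ 1 - a * ((x - u) ⬝ᵥ D.mulVec (x - u))
    · rw [if_pos h, max_eq_right h]
      rw [Real.mul_rpow (by positivity) (Real.rpow_nonneg h _), ← Real.rpow_mul h]
      congr 1
      rw [hsdef]; ring
    · rw [if_neg h, max_eq_left (by linarith [lt_of_not_ge h])]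
      rw [Real.zero_rpow hq0, Real.zero_rpow hs.ne', mul_zero]
  simp_rw [hpt]
  rw [integral_const_mul, quad n hn a s ha hs D hD u]
  -- algebra
  have h1 : (gaussA n p * Real.sqrt D.det) ^ q = gaussA n p ^ q * D.det ^ (q/2) := by
    rw [Real.mul_rpow hA.le (Real.sqrt_nonneg _), Real.sqrt_eq_rpow,
      ← Real.rpow_mul hd.le]
    congr 1
    ring
  have h2 : gaussA n p ^ q = a ^ ((n:ℝ)/2 * q) * G₁ ^ q / (π ^ ((n:ℝ)/2 * q) * G₂ ^ q) := by
    rw [gaussA, ← hadef, ← hG1def, ← hG2def,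
      Real.div_rpow (by positivity) (by positivity),
      Real.mul_rpow (by positivity) hG1.le,
      Real.mul_rpow (by positivity) hG2.le,
      ← Real.rpow_mul ha.le, ← Real.rpow_mul pi_pos.le]
  have e1 : a ^ ((n:ℝ)/2 * q) = a ^ ((n:ℝ) * (q-1)/2) * a ^ ((n:ℝ)/2) := by
    rw [← Real.rpow_add ha]; congr 1; ring
  have e2 : π ^ ((n:ℝ)/2 * q) = π ^ ((n:ℝ) * (q-1)/2) * π ^ ((n:ℝ)/2) := by
    rw [← Real.rpow_add pi_pos]; congr 1; ring
  have e3 : D.det ^ (q/2) = D.det ^ ((q-1)/2) * D.det ^ ((1:ℝ)/2) := by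
    rw [← Real.rpow_add hd]; congr 1; ring
  have e4 : Real.sqrt D.det = D.det ^ ((1:ℝ)/2) := Real.sqrt_eq_rpow _
  have e5 : (a / π) ^ ((n:ℝ) * (q-1)/2) = a ^ ((n:ℝ) * (q-1)/2) / π ^ ((n:ℝ) * (q-1)/2) :=
    Real.div_rpow ha.le pi_pos.le _
  have e6 : (G₁ / G₂) ^ q = G₁ ^ q / G₂ ^ q := Real.div_rpow hG1.le hG2.le _
  have hGs1 : 0 < Real.Gamma (s + 1) := Real.Gamma_pos_of_pos (by linarith)
  have hGs2 : 0 < Real.Gamma (s + 1 + (n:ℝ)/2) := Real.Gamma_pos_of_pos (by positivity)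
  have hq1 : q / (p-1) + 1 = s + 1 := by rw [hsdef]
  have hq2 : q / (p-1) + 1 + (n:ℝ)/2 = s + 1 + (n:ℝ)/2 := by rw [hsdef]
  rw [h1, h2, e1, e2, e3, e4, e5, e6, hq1, hq2]
  have hane : a ^ ((n:ℝ)/2) ≠ 0 := by positivity
  have hpine : π ^ ((n:ℝ)/2) ≠ 0 := by positivity
  have hdne : D.det ^ ((1:ℝ)/2) ≠ 0 := by positivity
  field_simp
end

section
/- Let D be an n×n real symmetric positive definite matrix, let X, Y be n×n real symmetric matrices, and let c be a real number. Then ∂²/∂s∂t [ (det(D + tX + sY))^c ] evaluated at t = s = 0 equals c·(det D)^c·( c·Tr(X D⁻¹)·Tr(Y D⁻¹) − Tr(X D⁻¹ Y D⁻¹) ). -/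
open Matrix

attribute [local instance] Matrix.linftyOpNormedAddCommGroup Matrix.linftyOpNormedRing
  Matrix.linftyOpNormedAlgebra

section aux
variable {n : ℕ}

lemma hasDerivAt_det_line (M B : Matrix (Fin n) (Fin n) ℝ) (hM : M.det ≠ 0) :
    HasDerivAt (fun t : ℝ => (M + t • B).det) (M.det * (M⁻¹ * B).trace) 0 := by
  set A := M⁻¹ * B with hA
  set q := (Matrix.det (1 + (Polynomial.X : Polynomial ℝ) • A.map Polynomial.C)).divX.divX
    with hq
  have key : ∀ t : ℝ, (M + t • B).det = M.det * (1 + A.trace * t + q.eval t * t ^ 2) := by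
    intro t
    have h1 : M + t • B = M * (1 + t • A) := by
      rw [mul_add, mul_one, mul_smul_comm, hA, ← Matrix.mul_assoc,
        Matrix.mul_nonsing_inv _ (isUnit_iff_ne_zero.mpr hM), Matrix.one_mul]
    rw [h1, det_mul, Matrix.det_one_add_smul]
  have h1 : HasDerivAt (fun t : ℝ => 1 + A.trace * t + q.eval t * t ^ 2) A.trace 0 := by
    have ha := ((hasDerivAt_id (0 : ℝ)).const_mul A.trace).const_add 1
    have hb := (q.hasDerivAt (0 : ℝ)).mul (hasDerivAt_pow 2 (0 : ℝ))
    exact (ha.add hb).congr_deriv (by norm_num)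
  have := h1.const_mul M.det
  simpa [← key] using this

lemma hasDerivAt_det_rpow_line (M B : Matrix (Fin n) (Fin n) ℝ) (hM : M.det ≠ 0) (c : ℝ) :
    HasDerivAt (fun t : ℝ => (M + t • B).det ^ c) (c * M.det ^ c * (B * M⁻¹).trace) 0 := by
  have h := (hasDerivAt_det_line M B hM).rpow_const (p := c) (Or.inl (by simpa using hM))
  simp only [zero_smul, add_zero] at h
  convert h using 1
  rw [trace_mul_comm]
  have : M.det ^ c = M.det ^ (c - 1) * M.det := by
    rw [← Real.rpow_add_one hM (c - 1), sub_add_cancel]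
  rw [this]; ring

end aux

/-- the second derivative of `(det(D + tX + sY))^c` at `t = s = 0`
equals `c·(det D)^c·(c·Tr(XD⁻¹)·Tr(YD⁻¹) − Tr(XD⁻¹YD⁻¹))`. -/
theorem secondDeriv_det_rpow (n : ℕ)
    (D X Y : Matrix (Fin n) (Fin n) ℝ) (hD : D.PosDef)
    (hX : X.IsSymm) (hY : Y.IsSymm) (c : ℝ) :
    deriv (fun s : ℝ =>
        deriv (fun t : ℝ => (D + t • X + s • Y).det ^ c) 0) 0 =
      c * D.det ^ c *
        (c * (X * D⁻¹).trace * (Y * D⁻¹).trace - (X * D⁻¹ * Y * D⁻¹).trace) := by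
  haveI : CompleteSpace (Matrix (Fin n) (Fin n) ℝ) := FiniteDimensional.complete ℝ _
  have hdet0 : D.det ≠ 0 := hD.det_pos.ne'
  have hcont : Continuous fun s : ℝ => (D + s • Y).det :=
    Continuous.matrix_det (by continuity)
  have hev : ∀ᶠ s : ℝ in nhds 0, (D + s • Y).det ≠ 0 :=
    hcont.continuousAt (x := (0 : ℝ)) |>.eventually_ne (by simpa using hdet0)
  have hg : (fun s : ℝ => deriv (fun t : ℝ => (D + t • X + s • Y).det ^ c) 0)
      =ᶠ[nhds 0] fun s : ℝ =>
        c * ((D + s • Y).det ^ c * (X * (D + s • Y)⁻¹).trace) := by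
    filter_upwards [hev] with s hs
    have h1 : (fun t : ℝ => (D + t • X + s • Y).det ^ c)
        = fun t : ℝ => ((D + s • Y) + t • X).det ^ c := by
      funext t; rw [add_right_comm]
    rw [h1, (hasDerivAt_det_rpow_line (D + s • Y) X hs c).deriv]; ring
  rw [hg.deriv_eq]
  have hrpow := hasDerivAt_det_rpow_line D Y hdet0 c
  have hu : IsUnit D := (Matrix.isUnit_iff_isUnit_det D).mpr (isUnit_iff_ne_zero.mpr hdet0)
  have hline : HasDerivAt (fun s : ℝ => D + s • Y) Y 0 := by
    exact (((hasDerivAt_id (0 : ℝ)).smul_const Y).const_add D).congr_deriv (by simp)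
  have hcoe : (↑hu.unit⁻¹ : Matrix (Fin n) (Fin n) ℝ) = D⁻¹ := by
    rw [Matrix.coe_units_inv, hu.unit_spec]
  have hFinv : HasDerivAt (fun s : ℝ => (D + s • Y)⁻¹) (-(D⁻¹ * Y * D⁻¹)) 0 := by
    have h0 : HasFDerivAt (Ring.inverse)
        (-(ContinuousLinearMap.mulLeftRight ℝ (Matrix (Fin n) (Fin n) ℝ) D⁻¹ D⁻¹))
        (D + (0 : ℝ) • Y) := by
      simpa [hu.unit_spec, hcoe] using hasFDerivAt_ringInverse (𝕜 := ℝ) hu.unit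
    have h1 := h0.comp_hasDerivAt 0 hline
    simp only [Function.comp_def, Matrix.nonsing_inv_eq_ringInverse,
      ContinuousLinearMap.mulLeftRight_apply, Matrix.mul_assoc, zero_smul, add_zero,
      ContinuousLinearMap.neg_apply] at h1 ⊢
    exact h1
  set φL : Matrix (Fin n) (Fin n) ℝ →ₗ[ℝ] ℝ :=
    (Matrix.traceLinearMap (Fin n) ℝ ℝ).comp (LinearMap.mulLeft ℝ X) with hφL
  have htr : HasDerivAt (fun s : ℝ => (X * (D + s • Y)⁻¹).trace)
      (-(X * D⁻¹ * Y * D⁻¹).trace) 0 := by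
    have h := (φL.toContinuousLinearMap.hasFDerivAt).comp_hasDerivAt 0 hFinv
    simp only [hφL, Function.comp_def, LinearMap.coe_toContinuousLinearMap', LinearMap.coe_comp,
      LinearMap.mulLeft_apply, Matrix.traceLinearMap_apply, Matrix.mul_assoc, Matrix.mul_neg,
      Matrix.trace_neg] at h ⊢
    exact h.congr_deriv (by
      change (X * -(D⁻¹ * (Y * D⁻¹))).trace = _
      simp [Matrix.mul_assoc])
  have hd := ((hrpow.mul htr).const_mul c).deriv
  simp only [zero_smul, add_zero] at hd
  exact hd.trans (by ring)
end

section
/- Fix α, β ∈ ℝ with α ≠ −1/(2n). For every D ∈ 𝓜ₙ, u ∈ ℝⁿ, and all symmetric matrices X, Y, Z and vectors x, y, z ∈ ℝⁿ, the explicit covariant derivative Γ_{(D,u)}(X,x)(Y,y) = ( −(1/2)(XD⁻¹Y + YD⁻¹X) − (β/2)·D(x⊙y)D + (2αβ/(1+2nα))·⟨x,Dy⟩·D , (1/2)·D⁻¹(Xy + Yx) ) satisfies the Koszul identity g_{D,u}( Γ_{(D,u)}(X,x)(Y,y), (Z,z) ) = −(1/4)·Tr( D⁻¹(XD⁻¹Y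 + YD⁻¹X)D⁻¹Z ) − (α/2)·Tr( D⁻¹(XD⁻¹Y + YD⁻¹X) )·Tr(D⁻¹Z) + (β/2)·( ⟨y, Xz⟩ + ⟨x, Yz⟩ − ⟨x, Zy⟩ ). -/
open Matrix

/-- Symmetrized dyadic product `x⊙y = xyᵀ + yxᵀ`. -/
def symDyad (n : ℕ) (x y : Fin n → ℝ) : Matrix (Fin n) (Fin n) ℝ :=
  vecMulVec x y + vecMulVec y x

/-- the explicit covariant derivative of the unified metric satisfies the
Koszul identity. -/
theorem covariantDeriv_koszul (n : ℕ) (hn : 1 ≤ n) (α β : ℝ)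
    (hα : α ≠ -1 / (2 * (n : ℝ)))
    (D : Matrix (Fin n) (Fin n) ℝ) (hD : D.PosDef) (u : Fin n → ℝ)
    (X Y Z : Matrix (Fin n) (Fin n) ℝ)
    (hX : X.IsSymm) (hY : Y.IsSymm) (hZ : Z.IsSymm)
    (x y z : Fin n → ℝ) :
    (1 / 2) * (D⁻¹ *
        (-((1 : ℝ) / 2) • (X * D⁻¹ * Y + Y * D⁻¹ * X) -
          (β / 2) • (D * symDyad n x y * D) +
          ((2 * α * β / (1 + 2 * n * α)) * (x ⬝ᵥ D.mulVec y)) • D) * D⁻¹ * Z).trace +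
      α * (D⁻¹ *
        (-((1 : ℝ) / 2) • (X * D⁻¹ * Y + Y * D⁻¹ * X) -
          (β / 2) • (D * symDyad n x y * D) +
          ((2 * α * β / (1 + 2 * n * α)) * (x ⬝ᵥ D.mulVec y)) • D)).trace *
        (D⁻¹ * Z).trace +
      β * ((((1 : ℝ) / 2) • (D⁻¹.mulVec (X.mulVec y + Y.mulVec x))) ⬝ᵥ D.mulVec z) =
    -(1 / 4) * (D⁻¹ * (X * D⁻¹ * Y + Y * D⁻¹ * X) * D⁻¹ * Z).trace -
      (α / 2) * (D⁻¹ * (X * D⁻¹ * Y + Y * D⁻¹ * X)).trace * (D⁻¹ * Z).trace +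
      (β / 2) * ((y ⬝ᵥ X.mulVec z) + (x ⬝ᵥ Y.mulVec z) - (x ⬝ᵥ Z.mulVec y)) := by
  have hu : IsUnit D.det := isUnit_iff_ne_zero.2 (ne_of_gt hD.det_pos)
  have hDt : Dᵀ = D := hD.isHermitian.eq
  have hinv : D⁻¹ * D = 1 := nonsing_inv_mul _ hu
  have hinv' : D * D⁻¹ = 1 := mul_nonsing_inv _ hu
  have hDit : D⁻¹ᵀ = D⁻¹ := by rw [transpose_nonsing_inv, hDt]
  have hn0 : (0:ℝ) < n := by exact_mod_cast hn
  have h2n : (1 + 2 * (n:ℝ) * α) ≠ 0 := by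
    intro h; apply hα; field_simp; linarith
  -- symmetric dot-product swap
  have symm_dot : ∀ (A : Matrix (Fin n) (Fin n) ℝ), Aᵀ = A →
      ∀ a b : Fin n → ℝ, a ⬝ᵥ A *ᵥ b = b ⬝ᵥ A *ᵥ a := by
    intro A hA a b
    rw [dotProduct_mulVec, ← mulVec_transpose, hA, dotProduct_comm]
  -- trace of vecMulVec times a matrix
  have trSM : ∀ (a b : Fin n → ℝ) (M : Matrix (Fin n) (Fin n) ℝ),
      (vecMulVec a b * M).trace = b ⬝ᵥ M *ᵥ a := by
    intro a b M
    simp [Matrix.trace, Matrix.mul_apply, vecMulVec, Matrix.diag, dotProduct, mulVec,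
      Finset.mul_sum, Finset.sum_mul]
    rw [Finset.sum_comm]
    apply Finset.sum_congr rfl; intros; apply Finset.sum_congr rfl; intros; ring
  set c : ℝ := 2 * α * β / (1 + 2 * n * α) with hc
  set s : ℝ := x ⬝ᵥ D.mulVec y with hs
  set W : Matrix (Fin n) (Fin n) ℝ := X * D⁻¹ * Y + Y * D⁻¹ * X with hW
  set S : Matrix (Fin n) (Fin n) ℝ := symDyad n x y with hS
  -- trace of S * Z and S * D
  have trSZ : (S * Z).trace = 2 * (x ⬝ᵥ Z.mulVec y) := by
    rw [hS, symDyad, add_mul, trace_add, trSM, trSM, symm_dot Z hZ y x]; ring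
  have trSD : (S * D).trace = 2 * s := by
    rw [hS, symDyad, add_mul, trace_add, trSM, trSM, symm_dot D hDt y x, hs]; ring
  -- key matrix simplifications
  have e1 : D⁻¹ * (D * S * D) * D⁻¹ * Z = S * Z := by
    have h : D⁻¹ * (D * S * D) * D⁻¹ * Z = (D⁻¹ * D) * (S * ((D * D⁻¹) * Z)) := by
      simp only [mul_assoc]
    rw [h, hinv, hinv', one_mul, one_mul]
  have e2 : D⁻¹ * (D * S * D) = S * D := by
    have h : D⁻¹ * (D * S * D) = (D⁻¹ * D) * (S * D) := by simp only [mul_assoc]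
    rw [h, hinv, one_mul]
  have e3 : D⁻¹ * D * D⁻¹ * Z = D⁻¹ * Z := by rw [hinv, one_mul]
  -- first big trace
  have A1 : (D⁻¹ * (-((1 : ℝ) / 2) • W - (β / 2) • (D * S * D) + (c * s) • D)
        * D⁻¹ * Z).trace
      = -(1/2) * (D⁻¹ * W * D⁻¹ * Z).trace - β * (x ⬝ᵥ Z.mulVec y)
        + c * s * (D⁻¹ * Z).trace := by
    have expand : D⁻¹ * (-((1 : ℝ) / 2) • W - (β / 2) • (D * S * D) + (c * s) • D)
          * D⁻¹ * Z
        = (-((1 : ℝ) / 2)) • (D⁻¹ * W * D⁻¹ * Z) - (β / 2) • (S * Z)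
          + (c * s) • (D⁻¹ * Z) := by
      simp only [mul_sub, sub_mul, mul_add, add_mul, Matrix.mul_smul, Matrix.smul_mul]
      rw [e1, e3]
    rw [expand, trace_add, trace_sub, trace_smul, trace_smul, trace_smul, trSZ]
    simp only [smul_eq_mul]; ring
  -- second big trace
  have A2 : (D⁻¹ * (-((1 : ℝ) / 2) • W - (β / 2) • (D * S * D) + (c * s) • D)).trace
      = -(1/2) * (D⁻¹ * W).trace - β * s + c * s * n := by
    have expand : D⁻¹ * (-((1 : ℝ) / 2) • W - (β / 2) • (D * S * D) + (c * s) • D)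
        = (-((1 : ℝ) / 2)) • (D⁻¹ * W) - (β / 2) • (S * D)
          + (c * s) • (1 : Matrix (Fin n) (Fin n) ℝ) := by
      simp only [mul_sub, mul_add, Matrix.mul_smul]
      rw [e2, hinv]
    rw [expand, trace_add, trace_sub, trace_smul, trace_smul, trace_smul, trSD,
      trace_one, Fintype.card_fin]
    simp only [smul_eq_mul]
    ring
  -- vector term
  have A3 : (((1 : ℝ) / 2) • (D⁻¹.mulVec (X.mulVec y + Y.mulVec x))) ⬝ᵥ D.mulVec z
      = (1/2) * (y ⬝ᵥ X.mulVec z + x ⬝ᵥ Y.mulVec z) := by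
    rw [smul_dotProduct, smul_eq_mul]
    congr 1
    rw [dotProduct_comm, dotProduct_mulVec (D *ᵥ z), ← mulVec_transpose, hDit,
      mulVec_mulVec, hinv, one_mulVec, dotProduct_comm, add_dotProduct,
      dotProduct_comm (X *ᵥ y) z, dotProduct_comm (Y *ᵥ x) z,
      symm_dot X hX z y, symm_dot Y hY z x]
  have hcc : c * (1 + 2 * (n:ℝ) * α) = 2 * α * β := by
    rw [hc]; exact div_mul_cancel₀ _ h2n
  rw [A1, A2, A3]
  linear_combination (s * (D⁻¹ * Z).trace / 2) * hcc
end

section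
/- Let α > −1/2, β > 0 and a, b, c, d ∈ ℝ with a ≠ 0. The curve γ: ℝ → ℝ₊ × ℝ with D(t) = (2/a²)·cosh²(bt + c) and u(t) = a·√((1+2α)/β)·tanh(bt + c) + d satisfies, for all t ∈ ℝ, the geodesic equations D̈(t) = Ḋ(t)²/D(t) + (β/(1+2α))·D(t)²·u̇(t)² and ü(t) = −(Ḋ(t)/D(t))·u̇(t). -/
open Real

section aux

variable (b c : ℝ)

private lemma hs (t : ℝ) : HasDerivAt (fun t : ℝ => b * t + c) b t := by
  simpa using ((hasDerivAt_id t).const_mul b).add_const c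

private lemma hcosh (t : ℝ) :
    HasDerivAt (fun t : ℝ => Real.cosh (b * t + c)) (Real.sinh (b * t + c) * b) t :=
  (Real.hasDerivAt_cosh _).comp t (hs b c t)

private lemma hsinh (t : ℝ) :
    HasDerivAt (fun t : ℝ => Real.sinh (b * t + c)) (Real.cosh (b * t + c) * b) t :=
  (Real.hasDerivAt_sinh _).comp t (hs b c t)

private lemma htanh (t : ℝ) :
    HasDerivAt (fun t : ℝ => Real.tanh (b * t + c)) (b / Real.cosh (b * t + c) ^ 2) t := by
  have h := (hsinh b c t).fun_div (hcosh b c t) (Real.cosh_pos (b * t + c)).ne'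
  have heq : (fun t : ℝ => Real.sinh (b * t + c) / Real.cosh (b * t + c)) =
      fun t : ℝ => Real.tanh (b * t + c) := by
    funext x; rw [Real.tanh_eq_sinh_div_cosh]
  rw [heq] at h
  convert h using 1 <;> try rfl
  have h1 : Real.cosh (b * t + c) ^ 2 = Real.sinh (b * t + c) ^ 2 + 1 := Real.cosh_sq _
  have hc : Real.cosh (b * t + c) ≠ 0 := (Real.cosh_pos _).ne'
  rw [div_left_inj' (pow_ne_zero 2 hc)]
  linear_combination (-b) * h1

private lemma hD (a : ℝ) (t : ℝ) :
    HasDerivAt (fun t : ℝ => 2 / a ^ 2 * Real.cosh (b * t + c) ^ 2)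
      (2 / a ^ 2 * (2 * Real.cosh (b * t + c) * (Real.sinh (b * t + c) * b))) t := by
  have := (((hcosh b c t).fun_pow 2).const_mul (2 / a ^ 2))
  convert this using 1 <;> try rfl
  ring

private lemma derivD (a : ℝ) :
    deriv (fun t : ℝ => 2 / a ^ 2 * Real.cosh (b * t + c) ^ 2) =
      fun t : ℝ => 2 / a ^ 2 * (2 * Real.cosh (b * t + c) * (Real.sinh (b * t + c) * b)) := by
  funext x; exact (hD b c a x).deriv

private lemma hu (k : ℝ) (d : ℝ) (t : ℝ) :
    HasDerivAt (fun t : ℝ => k * Real.tanh (b * t + c) + d)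
      (k * (b / Real.cosh (b * t + c) ^ 2)) t :=
  ((htanh b c t).const_mul k).add_const d

private lemma derivU (k d : ℝ) :
    deriv (fun t : ℝ => k * Real.tanh (b * t + c) + d) =
      fun t : ℝ => k * (b / Real.cosh (b * t + c) ^ 2) := by
  funext x; exact (hu b c k d x).deriv

private lemma derivD2 (a : ℝ) (t : ℝ) :
    deriv (deriv fun t : ℝ => 2 / a ^ 2 * Real.cosh (b * t + c) ^ 2) t =
      2 / a ^ 2 * (2 * b ^ 2 * (Real.cosh (b * t + c) ^ 2 + Real.sinh (b * t + c) ^ 2)) := by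
  rw [derivD]
  have h := (((hcosh b c t).fun_mul (hsinh b c t)).const_mul (2 / a ^ 2 * (2 * b)))
  have heq : (fun t : ℝ => 2 / a ^ 2 * (2 * Real.cosh (b * t + c) * (Real.sinh (b * t + c) * b)))
      = fun t : ℝ => 2 / a ^ 2 * (2 * b) * (Real.cosh (b * t + c) * Real.sinh (b * t + c)) := by
    funext x; ring
  rw [heq]
  rw [h.deriv]
  ring

private lemma derivU2 (k d : ℝ) (t : ℝ) :
    deriv (deriv fun t : ℝ => k * Real.tanh (b * t + c) + d) t =
      -(2 * k * b ^ 2 * Real.sinh (b * t + c) / Real.cosh (b * t + c) ^ 3) := by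
  rw [derivU]
  have hc : Real.cosh (b * t + c) ≠ 0 := (Real.cosh_pos _).ne'
  have h := ((hasDerivAt_const t (k * b)).fun_div ((hcosh b c t).fun_pow 2) (pow_ne_zero 2 hc))
  have heq : (fun t : ℝ => k * (b / Real.cosh (b * t + c) ^ 2)) =
      fun t : ℝ => k * b / Real.cosh (b * t + c) ^ 2 := by
    funext x; ring
  rw [heq, h.deriv]
  field_simp
  ring

end aux

/-- the explicit curve `t ↦ ((2/a²)·cosh²(bt+c), a·√((1+2α)/β)·tanh(bt+c)+d)`
in the half-plane satisfies the one-dimensional geodesic equations of the unified metric. -/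
theorem geodesic_curve_dim_one (α β : ℝ) (hα : -1 / 2 < α) (hβ : 0 < β)
    (a b c d : ℝ) (ha : a ≠ 0) (t : ℝ) :
    deriv (deriv fun t : ℝ => 2 / a ^ 2 * Real.cosh (b * t + c) ^ 2) t =
        (deriv (fun t : ℝ => 2 / a ^ 2 * Real.cosh (b * t + c) ^ 2) t) ^ 2 /
          (2 / a ^ 2 * Real.cosh (b * t + c) ^ 2) +
        β / (1 + 2 * α) * (2 / a ^ 2 * Real.cosh (b * t + c) ^ 2) ^ 2 *
          (deriv (fun t : ℝ =>
            a * Real.sqrt ((1 + 2 * α) / β) * Real.tanh (b * t + c) + d) t) ^ 2 ∧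
      deriv (deriv fun t : ℝ =>
          a * Real.sqrt ((1 + 2 * α) / β) * Real.tanh (b * t + c) + d) t =
        -(deriv (fun t : ℝ => 2 / a ^ 2 * Real.cosh (b * t + c) ^ 2) t /
            (2 / a ^ 2 * Real.cosh (b * t + c) ^ 2)) *
          deriv (fun t : ℝ =>
            a * Real.sqrt ((1 + 2 * α) / β) * Real.tanh (b * t + c) + d) t := by
  set k : ℝ := a * Real.sqrt ((1 + 2 * α) / β) with hk
  have h1 : (0:ℝ) < 1 + 2 * α := by linarith
  have hkk : k ^ 2 = a ^ 2 * ((1 + 2 * α) / β) := by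
    rw [hk, mul_pow, sq_sqrt (by positivity)]
  have hc : Real.cosh (b * t + c) ≠ 0 := (Real.cosh_pos _).ne'
  have hcs : Real.cosh (b * t + c) ^ 2 = Real.sinh (b * t + c) ^ 2 + 1 := Real.cosh_sq _
  have hD1 := (hD b c a t).deriv
  have hU1 := (hu b c k d t).deriv
  constructor
  · rw [derivD2, hD1, hU1]
    have ha2 : (a:ℝ) ^ 2 ≠ 0 := pow_ne_zero 2 ha
    have hkk' : k ^ 2 * β = a ^ 2 * (1 + 2 * α) := by
      rw [hkk]; field_simp
    field_simp
    linear_combination (a^2*b^2*(1+2*α)) * hcs - b^2 * hkk'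
  · rw [derivU2, hD1, hU1]
    field_simp
end

section
/- Let α ∈ ℝ, let D₀ be an n×n real symmetric positive definite matrix, L an n×n real symmetric matrix, and γ(t) = D₀^{1/2}·exp(tL)·D₀^{1/2}. Then for all t ∈ ℝ, g_{γ(t)}(γ̇(t), γ̇(t)) = (1/2)·Tr(L²) + α·(Tr L)². In particular, if D₁ = D₀^{1/2}·exp(L)·D₀^{1/2} with L = log(D₀^{−1/2} D₁ D₀^{−1/2}), the geodesic distance between D₀ and D₁ is √( (1/2)·Tr log²(D₀^{−1/2} D₁ D₀^{−1/2}) + α·Tr² log(D₀^{−1/2} D₁ D₀^{−1/2}) ). -/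
open Matrix intervalIntegral

open scoped MatrixOrder

/-- Entry evaluation of `S * M * S` as a linear map in `M`. -/
private def entryMap (n : ℕ) (S : Matrix (Fin n) (Fin n) ℝ) (i j : Fin n) :
    Matrix (Fin n) (Fin n) ℝ →ₗ[ℝ] ℝ where
  toFun M := (S * M * S) i j
  map_add' M N := by simp [Matrix.mul_add, Matrix.add_mul]
  map_smul' c M := by simp [Matrix.mul_smul, Matrix.smul_mul]

private lemma deriv_entry (n : ℕ) (L S : Matrix (Fin n) (Fin n) ℝ) (t : ℝ) (i j : Fin n) :
    HasDerivAt (fun s : ℝ => (S * NormedSpace.exp (s • L) * S) i j)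
      ((S * (NormedSpace.exp (t • L) * L) * S) i j) t := by
  open scoped Norms.Operator in
  have h1 : HasDerivAt (fun s : ℝ => NormedSpace.exp (s • L))
      (NormedSpace.exp (t • L) * L) t := hasDerivAt_exp_smul_const L t
  open scoped Norms.Operator in
  have h2 := ((entryMap n S i j).toContinuousLinearMap.hasFDerivAt).comp_hasDerivAt t h1
  exact h2

/-- along the geodesic `γ(t) = D₀^{1/2}·exp(tL)·D₀^{1/2}` the squared speed
with respect to the metric `g_D(X,Y) = (1/2)·Tr(D⁻¹XD⁻¹Y) + α·Tr(D⁻¹X)·Tr(D⁻¹Y)` is the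
constant `(1/2)·Tr(L²) + α·(Tr L)²`; in particular, with
`L = log(D₀^{−1/2}·D₁·D₀^{−1/2})` (i.e. `exp L = D₀^{−1/2}·D₁·D₀^{−1/2}`, `D₁ = γ(1)`),
the geodesic distance between `D₀` and `D₁` is `√((1/2)·Tr(L²) + α·(Tr L)²)`. -/
theorem geodesic_speed_and_distance (n : ℕ) (α : ℝ)
    (D₀ L : Matrix (Fin n) (Fin n) ℝ) (hD₀ : D₀.PosDef) (hL : L.IsSymm)
    (γ γ' : ℝ → Matrix (Fin n) (Fin n) ℝ)
    (hγ : ∀ t, γ t =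
      CFC.sqrt D₀ * NormedSpace.exp (t • L) * CFC.sqrt D₀)
    (hγ' : ∀ t i j, HasDerivAt (fun s => γ s i j) (γ' t i j) t) :
    (∀ t : ℝ,
        (1 / 2) * ((γ t)⁻¹ * γ' t * (γ t)⁻¹ * γ' t).trace +
            α * ((γ t)⁻¹ * γ' t).trace ^ 2 =
          (1 / 2) * (L * L).trace + α * L.trace ^ 2) ∧
      (∫ t in (0 : ℝ)..1,
          Real.sqrt ((1 / 2) * ((γ t)⁻¹ * γ' t * (γ t)⁻¹ * γ' t).trace +
            α * ((γ t)⁻¹ * γ' t).trace ^ 2)) =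
        Real.sqrt ((1 / 2) * (L * L).trace + α * L.trace ^ 2) := by
  set S := CFC.sqrt D₀ with hSdef
  have hSS : S * S = D₀ := CFC.sqrt_mul_sqrt_self D₀ hD₀.posSemidef.nonneg
  have hSdet : IsUnit S.det := by
    have hd : S.det * S.det = D₀.det := by rw [← Matrix.det_mul, hSS]
    have : D₀.det ≠ 0 := ne_of_gt hD₀.det_pos
    refine isUnit_iff_ne_zero.2 fun h => this ?_
    rw [← hd, h, mul_zero]
  -- derivative formula
  have hder : ∀ t, γ' t = S * (NormedSpace.exp (t • L) * L) * S := by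
    intro t
    ext i j
    have h1 : HasDerivAt (fun s => γ s i j)
        ((S * (NormedSpace.exp (t • L) * L) * S) i j) t := by
      have := deriv_entry n L S t i j
      refine this.congr_of_eventuallyEq ?_
      filter_upwards with s
      rw [hγ s]
    exact (hγ' t i j).unique h1
  have key : ∀ t, (γ t)⁻¹ * γ' t = S⁻¹ * (L * S) := by
    intro t
    set E := NormedSpace.exp (t • L) with hE
    have hEdet : IsUnit E.det :=
      (Matrix.isUnit_iff_isUnit_det _).mp (Matrix.isUnit_exp (t • L))
    rw [hγ t, hder t, Matrix.mul_inv_rev, Matrix.mul_inv_rev]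
    simp only [Matrix.mul_assoc]
    rw [Matrix.nonsing_inv_mul_cancel_left _ _ hSdet,
      Matrix.nonsing_inv_mul_cancel_left _ _ hEdet]
  have htr : ∀ t, ((γ t)⁻¹ * γ' t).trace = L.trace := by
    intro t
    rw [key t, ← Matrix.mul_assoc, Matrix.trace_mul_cycle,
      Matrix.mul_nonsing_inv _ hSdet, Matrix.one_mul]
  have htr2 : ∀ t, ((γ t)⁻¹ * γ' t * ((γ t)⁻¹ * γ' t)).trace = (L * L).trace := by
    intro t
    rw [key t]
    have : S⁻¹ * (L * S) * (S⁻¹ * (L * S)) = S⁻¹ * (L * (L * S)) := by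
      simp only [Matrix.mul_assoc]
      rw [Matrix.mul_nonsing_inv_cancel_left _ _ hSdet]
    rw [this, ← Matrix.mul_assoc, ← Matrix.mul_assoc, Matrix.trace_mul_cycle,
      Matrix.mul_nonsing_inv_cancel_left _ _ hSdet]
  have h1 : ∀ t : ℝ,
      (1 / 2) * ((γ t)⁻¹ * γ' t * (γ t)⁻¹ * γ' t).trace +
          α * ((γ t)⁻¹ * γ' t).trace ^ 2 =
        (1 / 2) * (L * L).trace + α * L.trace ^ 2 := by
    intro t
    rw [Matrix.mul_assoc, htr2 t, htr t]
  refine ⟨h1, ?_⟩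
  simp_rw [h1]
  rw [intervalIntegral.integral_const]
  simp
end

section
/- Fix n ≥ 1 and α, β ∈ ℝ with α ≠ −1/(2n) and β ≠ 0, and let D ∈ 𝓜ₙ, u ∈ ℝⁿ. Define the linear map R̃ on pairs (X,x) (X symmetric n×n, x ∈ ℝⁿ) by R̃(X,x) = ( −((n+1)/2)·X + ((1+2(n+1)α)/(2(1+2nα)))·Tr(D⁻¹X)·D , −x/(2(1+2nα)) ). Then (i) g_{D,u}(R̃(X,x),(Y,y)) = −((n+1)/4)·Tr(D⁻¹XD⁻¹Y) + (1/4)·Tr(D⁻¹X)·Tr(D⁻¹Y) − (β/(2(1+2nα)))·⟨x,Dy⟩ for all (X,x),(Y,y), i.e. R̃ represents the Ricci tensor with respect to g; (ii) the trace of R̃ on Sym(n) × ℝⁿ equals −n(n+1)(2(n+2)(n−1)α + n+1)/(4(1+2nα)), the scalar curvature of the space of normal distributions; and (iii) the trace of the matrix component X ↦ −((n+1)/2)·X + ((1+2(n+1)α)/(2(1+2nα)))·Tr(D⁻¹X)·D on Sym(n) equals −n(2(n−1)(n+1)(n+2)α + n² + 2n − 1)/(4(1+2nα)), the scalar curvature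 of the space of special normal distributions. -/
open Matrix

/-- The submodule of symmetric `n×n` real matrices. -/
def symSub (n : ℕ) : Submodule ℝ (Matrix (Fin n) (Fin n) ℝ) where
  carrier := {A | A.IsSymm}
  add_mem' := fun hA hB => hA.add hB
  zero_mem' := Matrix.isSymm_zero
  smul_mem' := fun c _ hA => hA.smul c

/-- Linear equivalence between symmetric matrices and functions on sorted index pairs. -/
noncomputable def symSubEquiv (n : ℕ) :
    symSub n ≃ₗ[ℝ] ({ p : Fin n × Fin n // p.1 ≤ p.2 } → ℝ) where
  toFun A := fun p => (A : Matrix (Fin n) (Fin n) ℝ) p.1.1 p.1.2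
  map_add' A B := by funext p; simp
  map_smul' c A := by funext p; simp
  invFun x := ⟨Matrix.of fun i j =>
      if h : i ≤ j then x ⟨(i, j), h⟩ else x ⟨(j, i), le_of_not_ge h⟩, by
    apply Matrix.IsSymm.ext
    intro i j
    by_cases h : i ≤ j
    · by_cases h' : j ≤ i
      · have : i = j := le_antisymm h h'
        subst this; rfl
      · simp [Matrix.of_apply, dif_pos h, dif_neg h']
    · have h' : j ≤ i := le_of_not_ge h
      simp [Matrix.of_apply, dif_pos h', dif_neg h]⟩
  left_inv A := by
    apply Subtype.ext
    ext i j
    by_cases h : i ≤ j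
    · simp only [Matrix.of_apply, dif_pos h]
    · simp only [Matrix.of_apply, dif_neg h]
      exact A.2.apply i j
  right_inv x := by
    funext p
    obtain ⟨⟨i, j⟩, h⟩ := p
    simp [Matrix.of_apply, dif_pos h]

lemma finrank_symSub (n : ℕ) :
    Module.finrank ℝ (symSub n) = (n + 1).choose 2 := by
  rw [(symSubEquiv n).finrank_eq, Module.finrank_pi]
  rw [← Fintype.card_congr (Sym2.sortEquiv (α := Fin n))]
  simp [Sym2.card]

/-- the endomorphism `R̃` represents the Ricci tensor of the unified metric,
its trace is the scalar curvature of the space of normal distributions, and the trace of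
its matrix component is the scalar curvature of the space of special normal
distributions. -/
theorem ricci_endomorphism_and_scalar_curvature (n : ℕ) (hn : 1 ≤ n) (α β : ℝ)
    (hα : α ≠ -1 / (2 * (n : ℝ))) (hβ : β ≠ 0)
    (D : Matrix (Fin n) (Fin n) ℝ) (hD : D.PosDef) (u : Fin n → ℝ)
    (T : (symSub n × (Fin n → ℝ)) →ₗ[ℝ] (symSub n × (Fin n → ℝ)))
    (hT : ∀ (X : Matrix (Fin n) (Fin n) ℝ) (hX : X.IsSymm) (x : Fin n → ℝ),
      ((T (⟨X, hX⟩, x)).1 : Matrix (Fin n) (Fin n) ℝ) =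
          -(((n : ℝ) + 1) / 2) • X +
            ((1 + 2 * ((n : ℝ) + 1) * α) / (2 * (1 + 2 * n * α)) *
              (D⁻¹ * X).trace) • D ∧
        (T (⟨X, hX⟩, x)).2 = -(1 / (2 * (1 + 2 * (n : ℝ) * α))) • x)
    (S : symSub n →ₗ[ℝ] symSub n)
    (hS : ∀ (X : Matrix (Fin n) (Fin n) ℝ) (hX : X.IsSymm),
      ((S ⟨X, hX⟩ : symSub n) : Matrix (Fin n) (Fin n) ℝ) =
        -(((n : ℝ) + 1) / 2) • X +
          ((1 + 2 * ((n : ℝ) + 1) * α) / (2 * (1 + 2 * n * α)) *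
            (D⁻¹ * X).trace) • D) :
    (∀ (X : Matrix (Fin n) (Fin n) ℝ) (_ : X.IsSymm) (x : Fin n → ℝ)
        (Y : Matrix (Fin n) (Fin n) ℝ) (_ : Y.IsSymm) (y : Fin n → ℝ),
        (1 / 2) * (D⁻¹ *
            (-(((n : ℝ) + 1) / 2) • X +
              ((1 + 2 * ((n : ℝ) + 1) * α) / (2 * (1 + 2 * n * α)) *
                (D⁻¹ * X).trace) • D) * D⁻¹ * Y).trace +
          α * (D⁻¹ *
            (-(((n : ℝ) + 1) / 2) • X +
              ((1 + 2 * ((n : ℝ) + 1) * α) / (2 * (1 + 2 * n * α)) *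
                (D⁻¹ * X).trace) • D)).trace * (D⁻¹ * Y).trace +
          β * ((-(1 / (2 * (1 + 2 * (n : ℝ) * α))) • x) ⬝ᵥ D.mulVec y) =
        -(((n : ℝ) + 1) / 4) * (D⁻¹ * X * D⁻¹ * Y).trace +
          (1 / 4) * (D⁻¹ * X).trace * (D⁻¹ * Y).trace -
          β / (2 * (1 + 2 * n * α)) * (x ⬝ᵥ D.mulVec y)) ∧
      LinearMap.trace ℝ _ T =
        -((n : ℝ) * (n + 1) * (2 * (n + 2) * (n - 1) * α + n + 1)) /
          (4 * (1 + 2 * n * α)) ∧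
      LinearMap.trace ℝ _ S =
        -((n : ℝ) * (2 * (n - 1) * (n + 1) * (n + 2) * α + n ^ 2 + 2 * n - 1)) /
          (4 * (1 + 2 * n * α)) := by
  have hnR : (0 : ℝ) < (n : ℝ) := by exact_mod_cast hn
  have h1 : (1 + 2 * (n : ℝ) * α) ≠ 0 := by
    intro h
    apply hα
    field_simp
    linarith
  have hDi : D⁻¹ * D = 1 := Matrix.nonsing_inv_mul D hD.det_pos.ne'.isUnit
  have hDsymm : D.IsSymm := by
    have h := hD.1
    rwa [Matrix.IsHermitian, Matrix.conjTranspose_eq_transpose_of_trivial] at h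
  -- the trace of `S`
  have hfr : Module.finrank ℝ (symSub n) = (n + 1).choose 2 := finrank_symSub n
  have hStrace : LinearMap.trace ℝ _ S =
      -((n : ℝ) * (2 * (n - 1) * (n + 1) * (n + 2) * α + n ^ 2 + 2 * n - 1)) /
        (4 * (1 + 2 * n * α)) := by
    obtain ⟨Dsym, hDsymdef⟩ : ∃ Dsym : symSub n, Dsym = ⟨D, hDsymm⟩ := ⟨_, rfl⟩
    obtain ⟨φ, hφ⟩ : ∃ φ : symSub n →ₗ[ℝ] ℝ, φ =
        (Matrix.traceLinearMap (Fin n) ℝ ℝ).comp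
          ((LinearMap.mulLeft ℝ D⁻¹).comp (symSub n).subtype) := ⟨_, rfl⟩
    have hSdec : S = (-(((n : ℝ) + 1) / 2)) • LinearMap.id
        + ((1 + 2 * ((n : ℝ) + 1) * α) / (2 * (1 + 2 * n * α)))
          • dualTensorHom ℝ (symSub n) (symSub n) (φ ⊗ₜ[ℝ] Dsym) := by
      apply LinearMap.ext
      intro v
      refine Subtype.ext ?_
      rw [hS v.1 v.2]
      simp only [LinearMap.add_apply, LinearMap.smul_apply, LinearMap.id_apply,
        dualTensorHom_apply, Submodule.coe_add, Submodule.coe_smul, SetLike.val_smul,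
        smul_smul, hφ, LinearMap.comp_apply, Submodule.coe_subtype,
        LinearMap.mulLeft_apply, Matrix.traceLinearMap_apply, hDsymdef]
    have htr1 : LinearMap.trace ℝ (symSub n)
        (dualTensorHom ℝ (symSub n) (symSub n) (φ ⊗ₜ[ℝ] Dsym)) = φ Dsym := by
      have := LinearMap.ext_iff.1 (LinearMap.trace_eq_contract ℝ (symSub n)) (φ ⊗ₜ[ℝ] Dsym)
      simpa using this
    have hφD : φ Dsym = (n : ℝ) := by
      simp [hφ, hDsymdef, hDi]
    rw [hSdec, map_add, _root_.map_smul, _root_.map_smul, LinearMap.trace_id, htr1, hφD, hfr]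
    rw [smul_eq_mul, smul_eq_mul]
    have hcast : (((n + 1).choose 2 : ℕ) : ℝ) = (n + 1) * n / 2 := by
      rw [Nat.cast_choose_two]
      push_cast
      ring
    rw [hcast]
    field_simp [show (1 + (n : ℝ) * 2 * α) ≠ 0 by convert h1 using 2; ring]
    ring
  refine ⟨?_, ?_, hStrace⟩
  · -- the Ricci identity
    intro X _ x Y _ y
    have hsplit : ∀ a c : ℝ, D⁻¹ * (a • X + c • D)
        = a • (D⁻¹ * X) + c • (1 : Matrix (Fin n) (Fin n) ℝ) := by
      intro a c
      rw [Matrix.mul_add, Matrix.mul_smul, Matrix.mul_smul, hDi]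
    rw [hsplit]
    simp only [Matrix.add_mul, Matrix.smul_mul, Matrix.one_mul, Matrix.trace_add,
      Matrix.trace_smul, Matrix.trace_one, smul_dotProduct, smul_eq_mul,
      Fintype.card_fin]
    generalize (D⁻¹ * X * D⁻¹ * Y).trace = q
    generalize (D⁻¹ * X).trace = t
    generalize (D⁻¹ * Y).trace = s
    generalize x ⬝ᵥ D *ᵥ y = d
    field_simp
    ring
  · -- the trace of `T`
    have hTdec : T = LinearMap.prodMap S
        ((-(1 / (2 * (1 + 2 * (n : ℝ) * α)))) • LinearMap.id) := by
      apply LinearMap.ext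
      intro p
      obtain ⟨v, x⟩ := p
      have h := hT v.1 v.2 x
      refine Prod.ext ?_ ?_
      · refine Subtype.ext ?_
        rw [show ((LinearMap.prodMap S _) (v, x)).1 = S v from rfl]
        rw [show v = (⟨v.1, v.2⟩ : symSub n) from rfl] at h ⊢
        rw [h.1, hS v.1 v.2]
      · exact h.2
    rw [hTdec, LinearMap.trace_prodMap', hStrace, _root_.map_smul, LinearMap.trace_id,
      Module.finrank_pi, Fintype.card_fin, smul_eq_mul]
    field_simp
    ring
end
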